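/- Fix 0 < r < 1 and let f_x(z) = −(1/x)·ω(z, x)/ω(z, 1/x) with ω the Schottky–Klein prime function of A_r. Then for x ∈ (r, 1), f_x'(x) = (1/(1 − x²)) · ∏_{n=1}^∞ (1 − r^{2n})² / ((1 − r^{2n} x²)(1 − r^{2n} x^{−2})), and consequently f_x'(x) > 1/(1 − x²). -/

import Mathlib

open scoped ComplexConjugate

open Complex Filter Topology

set_option maxHeartbeats 1000000

/-- General lemma: continuity, multipliability and nonvanishing of an infinite product
whose factors are uniformly geometrically close to `1` on a set. -/
lemma skAux_tprod {u : ℕ → ℂ → ℂ} {s : Set ℂ} {C q : ℝ}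
    (hq0 : 0 ≤ q) (hq1 : q < 1)
    (hu : ∀ n, ContinuousOn (u n) s)
    (hb : ∀ n, ∀ z ∈ s, ‖u n z - 1‖ ≤ C * q ^ n) :
    ContinuousOn (fun z => ∏' n, u n z) s ∧
      ∀ z ∈ s, Multipliable (fun n => u n z) ∧
        ((∀ n, u n z ≠ 0) → (∏' n, u n z) ≠ 0) := by
  obtain ⟨N, hN⟩ : ∃ N, C * q ^ N ≤ 1 / 2 := by
    have h := (tendsto_pow_atTop_nhds_zero_of_lt_one hq0 hq1).const_mul C
    simp only [mul_zero] at h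
    exact (h.eventually (eventually_le_nhds (by norm_num))).exists
  set v : ℕ → ℂ → ℂ := fun n z => u (n + N) z with hv
  have hv1 : ∀ n, ∀ z ∈ s, ‖v n z - 1‖ ≤ 1 / 2 * q ^ n := by
    intro n z hz
    calc ‖u (n + N) z - 1‖ ≤ C * q ^ (n + N) := hb _ _ hz
      _ = C * q ^ N * q ^ n := by ring
      _ ≤ 1 / 2 * q ^ n := by
          exact mul_le_mul_of_nonneg_right hN (pow_nonneg hq0 n)
  have hv2 : ∀ n, ∀ z ∈ s, ‖v n z - 1‖ ≤ 1 / 2 := by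
    intro n z hz
    refine (hv1 n z hz).trans ?_
    have : q ^ n ≤ 1 := pow_le_one₀ hq0 hq1.le
    nlinarith
  have hvne : ∀ n, ∀ z ∈ s, v n z ≠ 0 := by
    intro n z hz h0
    have := hv2 n z hz
    rw [h0] at this
    norm_num at this
  have hvslit : ∀ n, ∀ z ∈ s, v n z ∈ slitPlane := by
    intro n z hz
    rw [mem_slitPlane_iff]
    left
    have h1 : |(v n z - 1).re| ≤ ‖v n z - 1‖ := Complex.abs_re_le_norm _
    have h2 : (v n z).re = 1 + (v n z - 1).re := by simp
    have := hv2 n z hz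
    rw [h2]
    have := abs_le.mp (h1.trans this)
    linarith [this.1]
  have hlog : ∀ n, ∀ z ∈ s, ‖Complex.log (v n z)‖ ≤ 3 / 4 * q ^ n := by
    intro n z hz
    have h := Complex.norm_log_one_add_half_le_self (z := v n z - 1) (hv2 n z hz)
    rw [show (1 : ℂ) + (v n z - 1) = v n z by ring] at h
    refine h.trans ?_
    have := hv1 n z hz
    nlinarith [norm_nonneg (v n z - 1), pow_nonneg hq0 n]
  have hsummable : ∀ z ∈ s, Summable (fun n => Complex.log (v n z)) := by
    intro z hz
    exact Summable.of_norm_bounded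
      (((summable_geometric_of_lt_one hq0 hq1).mul_left (3 / 4))) (fun n => hlog n z hz)
  set L : ℂ → ℂ := fun z => ∑' n, Complex.log (v n z) with hL
  have hLcont : ContinuousOn L s := by
    refine (tendstoUniformlyOn_tsum
      ((summable_geometric_of_lt_one hq0 hq1).mul_left (3 / 4))
      (fun n z hz => hlog n z hz)).continuousOn ?_
    exact (Eventually.of_forall fun t =>
      continuousOn_finset_sum _ fun i _ => (hu (i + N)).clog (fun z hz => hvslit i z hz)).frequently
  have hprod : ∀ z ∈ s, HasProd (fun n => v n z) (cexp (L z)) := by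
    intro z hz
    have h := (hsummable z hz).hasSum.cexp
    have he : (cexp ∘ fun n => Complex.log (v n z)) = fun n => v n z :=
      funext fun n => Complex.exp_log (hvne n z hz)
    rwa [he] at h
  have hwhole : ∀ z ∈ s, HasProd (fun n => u n z)
      ((∏ i ∈ Finset.range N, u i z) * cexp (L z)) := fun z hz =>
    HasProd.prod_range_mul (f := fun n => u n z) (hprod z hz)
  have hsplit : ∀ z ∈ s, (∏' n, u n z) = (∏ i ∈ Finset.range N, u i z) * cexp (L z) :=
    fun z hz => (hwhole z hz).tprod_eq
  refine ⟨?_, fun z hz => ⟨(hwhole z hz).multipliable, fun hne => ?_⟩⟩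
  · refine ContinuousOn.congr
      ((continuousOn_finset_prod _ fun i _ => hu i).mul (hLcont.cexp)) (fun z hz => hsplit z hz)
  · rw [hsplit z hz]
    exact mul_ne_zero (Finset.prod_ne_zero_iff.mpr fun i _ => hne i) (Complex.exp_ne_zero _)

/-- Transfer a complex `HasProd` of real values to a real `HasProd`. -/
lemma hasProd_ofReal_down {f : ℕ → ℝ} {c : ℂ}
    (h : HasProd (fun n => ((f n : ℝ) : ℂ)) c) : HasProd f c.re := by
  have := (Complex.continuous_re.tendsto c).comp h
  refine this.congr fun t => ?_
  simp only [Function.comp_apply]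
  rw [← Complex.ofReal_prod, Complex.ofReal_re]

/-- Inverse of a `HasProd` in a field. -/
lemma HasProd.inv₀' {f : ℕ → ℝ} {a : ℝ} (h : HasProd f a) (ha : a ≠ 0) :
    HasProd (fun n => (f n)⁻¹) a⁻¹ := by
  have h' : Tendsto (fun s : Finset ℕ => ∏ b ∈ s, f b) atTop (𝓝 a) := h
  have := h'.inv₀ ha
  refine this.congr fun t => ?_
  rw [← Finset.prod_inv_distrib]

/-- The Schottky–Klein prime function of the annulus `A_r`:
`ω(z,a) = (z-a) ∏_{n=1}^∞ (1 - r^{2n} z/a)(1 - r^{2n} a/z)/(1 - r^{2n})²`. -/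
noncomputable def skPrime (r : ℝ) (z a : ℂ) : ℂ :=
  (z - a) * ∏' n : ℕ,
    ((1 - (r : ℂ) ^ (2 * (n + 1)) * z / a) * (1 - (r : ℂ) ^ (2 * (n + 1)) * a / z))
      / (1 - (r : ℂ) ^ (2 * (n + 1))) ^ 2

/-- The canonical conformal map `f_x(z) = -(1/x) ω(z,x)/ω(z,1/x)` of the annulus
`A_r` onto a circularly slit disk, expressed via the Schottky–Klein prime function. -/
noncomputable def slitMap (r x : ℝ) (z : ℂ) : ℂ :=
  -(1 / (x : ℂ)) * skPrime r z (x : ℂ) / skPrime r z (1 / (x : ℂ))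


/-- The `n`-th factor of the Schottky–Klein product. -/
noncomputable def skFactor (r : ℝ) (a : ℂ) (n : ℕ) (z : ℂ) : ℂ :=
  ((1 - (r : ℂ) ^ (2 * (n + 1)) * z / a) * (1 - (r : ℂ) ^ (2 * (n + 1)) * a / z))
    / (1 - (r : ℂ) ^ (2 * (n + 1))) ^ 2

lemma skAux_apply (r : ℝ) (hr0 : 0 ≤ r) (hr1 : r < 1) (x : ℝ) (hx0 : 0 < x)
    (a : ℂ) (ha : a ≠ 0) :
    ContinuousAt (fun z => ∏' n, skFactor r a n z) (x : ℂ) ∧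
      Multipliable (fun n => skFactor r a n (x : ℂ)) ∧
      ((∀ n, skFactor r a n (x : ℂ) ≠ 0) → (∏' n, skFactor r a n (x : ℂ)) ≠ 0) := by
  have hq1 : r ^ 2 < 1 := by nlinarith
  set s : Set ℂ := Metric.closedBall (x : ℂ) (x / 2) with hsdef
  have hsx : s ∈ 𝓝 (x : ℂ) := Metric.closedBall_mem_nhds _ (by positivity)
  have hxs : (x : ℂ) ∈ s := Metric.mem_closedBall_self (by positivity)
  have hdist : ∀ z ∈ s, ‖z - (x : ℂ)‖ ≤ x / 2 := by
    intro z hz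
    simpa [hsdef, Metric.mem_closedBall, dist_eq_norm] using hz
  have hzlb : ∀ z ∈ s, x / 2 ≤ ‖z‖ := by
    intro z hz
    have h1 := hdist z hz
    have h2 : ‖(x : ℂ)‖ - ‖z‖ ≤ ‖(x : ℂ) - z‖ := norm_sub_norm_le _ _
    have h3 : ‖(x : ℂ) - z‖ = ‖z - (x : ℂ)‖ := by rw [norm_sub_rev]
    have h4 : ‖(x : ℂ)‖ = x := by simp [abs_of_pos hx0]
    linarith
  have hzub : ∀ z ∈ s, ‖z‖ ≤ x + x / 2 := by
    intro z hz
    have h1 := hdist z hz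
    have h2 : ‖z‖ - ‖(x : ℂ)‖ ≤ ‖z - (x : ℂ)‖ := norm_sub_norm_le _ _
    have h4 : ‖(x : ℂ)‖ = x := by simp [abs_of_pos hx0]
    linarith
  have hz0 : ∀ z ∈ s, z ≠ 0 := by
    intro z hz h0
    have := hzlb z hz
    rw [h0, norm_zero] at this
    linarith
  have hcnorm : ∀ n : ℕ, ‖(r : ℂ) ^ (2 * (n + 1))‖ = (r ^ 2) ^ (n + 1) := by
    intro n
    rw [norm_pow, Complex.norm_real, Real.norm_eq_abs, _root_.abs_of_nonneg hr0, ← pow_mul]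
  have hcle : ∀ n : ℕ, ‖(r : ℂ) ^ (2 * (n + 1))‖ ≤ r ^ 2 := by
    intro n
    rw [hcnorm n, pow_succ]
    calc (r ^ 2) ^ n * r ^ 2 ≤ 1 * r ^ 2 := by
          have : (r ^ 2) ^ n ≤ 1 := pow_le_one₀ (by positivity) hq1.le
          nlinarith [sq_nonneg r]
      _ = r ^ 2 := one_mul _
  have h1c : ∀ n : ℕ, (1 : ℂ) - (r : ℂ) ^ (2 * (n + 1)) ≠ 0 := by
    intro n h
    rw [sub_eq_zero] at h
    have := hcle n
    rw [← h] at this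
    simp only [norm_one] at this
    nlinarith
  have hlbc : ∀ n : ℕ, 1 - r ^ 2 ≤ ‖(1 : ℂ) - (r : ℂ) ^ (2 * (n + 1))‖ := by
    intro n
    have h2 : ‖(1 : ℂ)‖ - ‖(r : ℂ) ^ (2 * (n + 1))‖ ≤ ‖(1 : ℂ) - (r : ℂ) ^ (2 * (n + 1))‖ :=
      norm_sub_norm_le _ _
    have := hcle n
    simp only [norm_one] at h2
    linarith
  set M : ℝ := 2 + (x + x / 2) / ‖a‖ + ‖a‖ / (x / 2) with hMdef
  have hM0 : 0 ≤ M := by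
    have : 0 < ‖a‖ := norm_pos_iff.mpr ha
    positivity
  have hcont : ∀ n, ContinuousOn (skFactor r a n) s := by
    intro n
    unfold skFactor
    apply ContinuousOn.div
    · apply ContinuousOn.mul
      · exact continuousOn_const.sub
          (((continuous_const.mul continuous_id).div_const a).continuousOn)
      · exact continuousOn_const.sub
          (ContinuousOn.div continuousOn_const continuousOn_id (fun z hz => hz0 z hz))
    · exact continuousOn_const
    · intro z _
      exact pow_ne_zero _ (h1c n)
  have hbound : ∀ n, ∀ z ∈ s, ‖skFactor r a n z - 1‖ ≤
      (r ^ 2 * M / (1 - r ^ 2) ^ 2) * (r ^ 2) ^ n := by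
    intro n z hz
    have hz' := hz0 z hz
    have key : skFactor r a n z - 1 =
        (r : ℂ) ^ (2 * (n + 1)) * (2 - z / a - a / z) /
          ((1 : ℂ) - (r : ℂ) ^ (2 * (n + 1))) ^ 2 := by
      unfold skFactor
      rw [div_sub_one (pow_ne_zero 2 (h1c n))]
      congr 1
      field_simp
      ring
    rw [key]
    have h1r2 : 0 < 1 - r ^ 2 := by nlinarith
    have hub2 : ‖2 - z / a - a / z‖ ≤ M := by
      have t1 : ‖(2 : ℂ) - z / a - a / z‖ ≤ ‖(2 : ℂ) - z / a‖ + ‖a / z‖ := norm_sub_le _ _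
      have t2 : ‖(2 : ℂ) - z / a‖ ≤ ‖(2 : ℂ)‖ + ‖z / a‖ := norm_sub_le _ _
      have t3 : ‖(2 : ℂ)‖ = 2 := by norm_num
      have ha' : 0 < ‖a‖ := norm_pos_iff.mpr ha
      have t4 : ‖z / a‖ ≤ (x + x / 2) / ‖a‖ := by
        rw [norm_div]
        gcongr
        exact hzub z hz
      have t5 : ‖a / z‖ ≤ ‖a‖ / (x / 2) := by
        rw [norm_div]
        apply div_le_div_of_nonneg_left (norm_nonneg a) (by positivity) (hzlb z hz)
      rw [hMdef]
      linarith
    calc ‖(r : ℂ) ^ (2 * (n + 1)) * (2 - z / a - a / z) /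
          ((1 : ℂ) - (r : ℂ) ^ (2 * (n + 1))) ^ 2‖
        = ‖(r : ℂ) ^ (2 * (n + 1))‖ * ‖2 - z / a - a / z‖ /
            ‖(1 : ℂ) - (r : ℂ) ^ (2 * (n + 1))‖ ^ 2 := by
          rw [norm_div, norm_mul, norm_pow, norm_pow]
      _ ≤ ((r ^ 2) ^ (n + 1) * M) / (1 - r ^ 2) ^ 2 := by
          apply div_le_div₀ (by positivity)
            (mul_le_mul (hcnorm n).le hub2 (norm_nonneg _) (by positivity))
            (by positivity)
            (pow_le_pow_left₀ h1r2.le (hlbc n) 2)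
      _ = (r ^ 2 * M / (1 - r ^ 2) ^ 2) * (r ^ 2) ^ n := by ring
  obtain ⟨hconts, hpt⟩ := skAux_tprod (by positivity) hq1 hcont hbound
  exact ⟨hconts.continuousAt hsx, (hpt _ hxs).1, (hpt _ hxs).2⟩

/-- Explicit formula for `f_x'(x)`:
`f_x'(x) = (1/(1-x²)) ∏_{n=1}^∞ (1-r^{2n})²/((1-r^{2n}x²)(1-r^{2n}x^{-2}))`,
and consequently `f_x'(x) > 1/(1-x²)`. -/
theorem slitMap_deriv (r : ℝ) (hr0 : 0 < r) (hr1 : r < 1)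
    (x : ℝ) (hx : x ∈ Set.Ioo r 1) :
    deriv (slitMap r x) (x : ℂ) =
      ((1 / (1 - x ^ 2) * ∏' n : ℕ, (1 - r ^ (2 * (n + 1))) ^ 2 /
        ((1 - r ^ (2 * (n + 1)) * x ^ 2) * (1 - r ^ (2 * (n + 1)) / x ^ 2)) : ℝ) : ℂ)
    ∧ 1 / (1 - x ^ 2) <
        1 / (1 - x ^ 2) * ∏' n : ℕ, (1 - r ^ (2 * (n + 1))) ^ 2 /
          ((1 - r ^ (2 * (n + 1)) * x ^ 2) * (1 - r ^ (2 * (n + 1)) / x ^ 2)) := by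
  obtain ⟨hrx, hx1⟩ := hx
  have hx0 : 0 < x := hr0.trans hrx
  have hxC : (x : ℂ) ≠ 0 := Complex.ofReal_ne_zero.mpr hx0.ne'
  have haC : (1 / (x : ℂ)) ≠ 0 := one_div_ne_zero hxC
  have hx2pos : (0:ℝ) < x ^ 2 := by positivity
  have h6 : (0:ℝ) < 1 - x ^ 2 := by nlinarith
  have hr2x2 : r ^ 2 < x ^ 2 := by nlinarith
  have hp_pos : ∀ n : ℕ, (0:ℝ) < r ^ (2 * (n + 1)) := fun n => by positivity
  have hple : ∀ n : ℕ, r ^ (2 * (n + 1)) ≤ r ^ 2 := by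
    intro n
    calc r ^ (2 * (n + 1)) = (r ^ 2) ^ (n + 1) := by rw [← pow_mul]
      _ ≤ (r ^ 2) ^ 1 := pow_le_pow_of_le_one (by positivity) (by nlinarith) (by omega)
      _ = r ^ 2 := pow_one _
  have hA : ∀ n : ℕ, (0:ℝ) < 1 - r ^ (2 * (n + 1)) * x ^ 2 := by
    intro n
    nlinarith [hp_pos n, hple n]
  have hB : ∀ n : ℕ, (0:ℝ) < 1 - r ^ (2 * (n + 1)) / x ^ 2 := by
    intro n
    have h1 : r ^ (2 * (n + 1)) / x ^ 2 < 1 := by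
      rw [div_lt_one hx2pos]
      exact lt_of_le_of_lt (hple n) hr2x2
    linarith
  have hD : ∀ n : ℕ, (0:ℝ) < 1 - r ^ (2 * (n + 1)) := by
    intro n
    nlinarith [hple n]
  have keyIneq : ∀ p : ℝ, 0 < p →
      (1 - p) ^ 2 - (1 - p * x ^ 2) * (1 - p / x ^ 2) = p / x ^ 2 * (1 - x ^ 2) ^ 2 := by
    intro p hp
    field_simp
    ring
  set vR : ℕ → ℝ := fun n => (1 - r ^ (2 * (n + 1)) * x ^ 2) *
      (1 - r ^ (2 * (n + 1)) / x ^ 2) / (1 - r ^ (2 * (n + 1))) ^ 2 with hvR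
  have hvRpos : ∀ n, 0 < vR n := by
    intro n
    have h1 := hA n; have h2 := hB n; have h3 := hD n
    simp only [hvR]
    positivity
  obtain ⟨hPc, hPm, -⟩ := skAux_apply r hr0.le hr1 x hx0 (x:ℂ) hxC
  obtain ⟨hQc, hQm, hQne⟩ := skAux_apply r hr0.le hr1 x hx0 (1/(x:ℂ)) haC
  have h1cC : ∀ n : ℕ, (1:ℂ) - (r:ℂ) ^ (2*(n+1)) ≠ 0 := by
    intro n
    have h := (hD n).ne'
    intro hcon
    apply h
    have : ((1 - r ^ (2 * (n + 1)) : ℝ) : ℂ) = 0 := by push_cast; linear_combination hcon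
    exact_mod_cast this
  have hPval : (∏' n, skFactor r (x:ℂ) n (x:ℂ)) = 1 := by
    have h1 : ∀ n : ℕ, skFactor r (x:ℂ) n (x:ℂ) = 1 := by
      intro n
      unfold skFactor
      rw [mul_div_assoc ((r:ℂ) ^ (2*(n+1))) (x:ℂ) (x:ℂ), div_self hxC, mul_one]
      rw [div_eq_one_iff_eq (pow_ne_zero 2 (h1cC n))]
      ring
    simp only [h1]
    exact tprod_one
  have hQfac : ∀ n : ℕ, skFactor r (1/(x:ℂ)) n (x:ℂ) = ((vR n : ℝ) : ℂ) := by
    intro n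
    unfold skFactor
    simp only [hvR]
    push_cast
    field_simp
  set T : ℂ := ∏' n, skFactor r (1/(x:ℂ)) n (x:ℂ) with hT
  have hTprod : HasProd (fun n => ((vR n : ℝ):ℂ)) T := by
    have h := hQm.hasProd
    rw [show (fun n => skFactor r (1/(x:ℂ)) n (x:ℂ)) = (fun n => ((vR n : ℝ):ℂ)) from
      funext hQfac] at h
    have h2 : (∏' n : ℕ, ((vR n : ℝ):ℂ)) = T := by
      rw [hT]
      exact tprod_congr fun n => (hQfac n).symm
    rwa [h2] at h
  have hTne : T ≠ 0 :=
    hQne fun n => by rw [hQfac n]; exact Complex.ofReal_ne_zero.mpr (hvRpos n).ne'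
  have htR : HasProd vR T.re := hasProd_ofReal_down hTprod
  have hTreal : T = ((T.re : ℝ) : ℂ) := by
    have hmap := htR.map Complex.ofRealHom Complex.continuous_ofReal
    exact hTprod.unique hmap
  have ht0 : T.re ≠ 0 := by
    intro h
    rw [hTreal, h] at hTne
    exact hTne (by push_cast; rfl)
  set g : ℕ → ℝ := fun n => (1 - r ^ (2 * (n + 1))) ^ 2 /
      ((1 - r ^ (2 * (n + 1)) * x ^ 2) * (1 - r ^ (2 * (n + 1)) / x ^ 2)) with hg
  have hginv : ∀ n, g n = (vR n)⁻¹ := by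
    intro n
    simp only [hg, hvR, inv_div]
  have hgHasProd : HasProd g (T.re)⁻¹ := by
    have h := htR.inv₀' ht0
    rwa [show (fun n => (vR n)⁻¹) = g from funext fun n => (hginv n).symm] at h
  have hgS : (∏' n, g n) = (T.re)⁻¹ := hgHasProd.tprod_eq
  have hg1 : ∀ n, 1 < g n := by
    intro n
    simp only [hg]
    rw [lt_div_iff₀ (mul_pos (hA n) (hB n))]
    have hk := keyIneq (r ^ (2 * (n + 1))) (hp_pos n)
    have hpos : 0 < r ^ (2 * (n + 1)) / x ^ 2 * (1 - x ^ 2) ^ 2 :=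
      mul_pos (div_pos (hp_pos n) hx2pos) (by positivity)
    linarith
  have hgeS : g 0 ≤ (T.re)⁻¹ := by
    have htend : Filter.Tendsto (fun u : Finset ℕ => ∏ i ∈ u, g i) Filter.atTop
        (𝓝 ((T.re)⁻¹)) := hgHasProd
    refine ge_of_tendsto htend ?_
    filter_upwards [Filter.eventually_ge_atTop ({0} : Finset ℕ)] with u hu
    have h0u : (0:ℕ) ∈ u := hu (Finset.mem_singleton_self 0)
    rw [← Finset.mul_prod_erase u g h0u]
    have hone : (1:ℝ) ≤ ∏ i ∈ u.erase 0, g i := by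
      calc (1:ℝ) = ∏ _i ∈ u.erase 0, (1:ℝ) := by simp
        _ ≤ ∏ i ∈ u.erase 0, g i :=
            Finset.prod_le_prod (fun i _ => zero_le_one) (fun i _ => (hg1 i).le)
    have hg0pos : 0 < g 0 := lt_trans one_pos (hg1 0)
    exact le_mul_of_one_le_right hg0pos.le hone
  have h1S : 1 < ∏' n, g n := by
    rw [hgS]
    exact lt_of_lt_of_le (hg1 0) hgeS
  constructor
  · -- the derivative computation
    have hxsub : (x:ℂ) - 1/(x:ℂ) ≠ 0 := by
      intro h
      rw [sub_eq_zero] at h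
      have h2 : (x:ℂ) * (x:ℂ) = 1 := by
        field_simp at h
        linear_combination h
      have h3 : (x:ℝ) * x = 1 := by exact_mod_cast h2
      nlinarith
    have hQxT : (∏' n, skFactor r (1/(x:ℂ)) n (x:ℂ)) = T := hT.symm
    have hDenne : ((x:ℂ) - 1/(x:ℂ)) * (∏' n, skFactor r (1/(x:ℂ)) n (x:ℂ)) ≠ 0 := by
      rw [hQxT]
      exact mul_ne_zero hxsub hTne
    set G : ℂ → ℂ := fun z => -(1/(x:ℂ)) * (∏' n, skFactor r (x:ℂ) n z) /
        ((z - 1/(x:ℂ)) * (∏' n, skFactor r (1/(x:ℂ)) n z)) with hG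
    have hGc : ContinuousAt G (x:ℂ) := by
      apply ContinuousAt.div
      · exact continuousAt_const.mul hPc
      · exact (continuousAt_id.sub continuousAt_const).mul hQc
      · exact hDenne
    have hfeq : ∀ z : ℂ, slitMap r x z = (z - (x:ℂ)) * G z := by
      intro z
      show -(1 / (x:ℂ)) * skPrime r z (x:ℂ) / skPrime r z (1/(x:ℂ)) = _
      have e1 : skPrime r z (x:ℂ) = (z - (x:ℂ)) * (∏' n, skFactor r (x:ℂ) n z) := rfl
      have e2 : skPrime r z (1/(x:ℂ)) = (z - 1/(x:ℂ)) * (∏' n, skFactor r (1/(x:ℂ)) n z) := rfl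
      rw [e1, e2, hG]
      ring
    have hf0 : slitMap r x (x:ℂ) = 0 := by
      rw [hfeq]
      simp
    have hHD : HasDerivAt (slitMap r x) (G (x:ℂ)) (x:ℂ) := by
      rw [hasDerivAt_iff_tendsto_slope]
      have hev : slope (slitMap r x) (x:ℂ) =ᶠ[𝓝[≠] (x:ℂ)] G := by
        filter_upwards [self_mem_nhdsWithin] with z hz
        have hzx : z - (x:ℂ) ≠ 0 := sub_ne_zero.mpr hz
        rw [slope_def_field, hfeq z, hf0, sub_zero, mul_comm, mul_div_assoc,
          div_self hzx, mul_one]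
      exact ((hGc.tendsto).mono_left nhdsWithin_le_nhds).congr' hev.symm
    rw [hHD.deriv, hgS]
    have hGval : G (x:ℂ) = -(1/(x:ℂ)) * 1 / (((x:ℂ) - 1/(x:ℂ)) * T) := by
      simp only [hG]
      rw [hPval, ← hT]
    rw [hGval]
    conv_lhs => rw [hTreal]
    have htC : ((T.re : ℝ):ℂ) ≠ 0 := Complex.ofReal_ne_zero.mpr ht0
    have h1x2C : (1:ℂ) - (x:ℂ) ^ 2 ≠ 0 := by
      intro h
      have h' : ((1 - x ^ 2 : ℝ) : ℂ) = 0 := by push_cast; linear_combination h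
      have := (Complex.ofReal_eq_zero).mp h'
      linarith
    have hden : ((x:ℂ) - 1/(x:ℂ)) * ((T.re : ℝ):ℂ) ≠ 0 := mul_ne_zero hxsub htC
    rw [div_eq_iff hden]
    push_cast
    field_simp [htC, h1x2C]
    ring
  · -- the inequality
    have hpos : (0:ℝ) < 1 / (1 - x ^ 2) := by positivity
    nlinarith [h1S, hpos]
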